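/- Let τ := (7+√37)/8 and let Z be the real symmetric 3×3 matrix with rows ( 2(1+√37), −9, (9/4)(√37−1) ), ( −9, (9/8)(√37−1), (9/16)(√37−19) ), ( (9/4)(√37−1), (9/16)(√37−19), (9/4)(√37−1) ). Then Z is positive semidefinite; equivalently, for all real u and t, τ·(16u² + 9t² + 36u + 9t + 18) − 3·(4u² + 3t² + 6ut + 10u + 9t + 6) ≥ 6u + (9/4)t. -/

import Mathlib

open Matrix

/-- The matrix Z = τB − A − X of the paper, with τ = (7+√37)/8. -/
noncomputable def Zmat : Matrix (Fin 3) (Fin 3) ℝ :=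
  !![2 * (1 + Real.sqrt 37), -9, (9 / 4) * (Real.sqrt 37 - 1);
     -9, (9 / 8) * (Real.sqrt 37 - 1), (9 / 16) * (Real.sqrt 37 - 19);
     (9 / 4) * (Real.sqrt 37 - 1), (9 / 16) * (Real.sqrt 37 - 19),
       (9 / 4) * (Real.sqrt 37 - 1)]

lemma s_sq : Real.sqrt 37 ^ 2 = 37 := Real.sq_sqrt (by norm_num)

lemma s_ub : Real.sqrt 37 ≤ 7 := by
  nlinarith [Real.sq_sqrt (show (37:ℝ) ≥ 0 by norm_num), Real.sqrt_nonneg (37:ℝ)]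

lemma key (x y z : ℝ) :
    0 ≤ 2 * (1 + Real.sqrt 37) * x ^ 2 + (9 / 8) * (Real.sqrt 37 - 1) * y ^ 2 +
      (9 / 4) * (Real.sqrt 37 - 1) * z ^ 2 - 18 * x * y +
      (9 / 2) * (Real.sqrt 37 - 1) * x * z + (9 / 8) * (Real.sqrt 37 - 19) * y * z := by
  set s := Real.sqrt 37 with hs
  have h1 : s ^ 2 = 37 := s_sq
  have h0 : (0 : ℝ) ≤ s := Real.sqrt_nonneg 37
  have h3 : s ≤ 7 := s_ub
  have hL : 2 * (1 + s) * x ^ 2 + (9 / 8) * (s - 1) * y ^ 2 +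
      (9 / 4) * (s - 1) * z ^ 2 - 18 * x * y + (9 / 2) * (s - 1) * x * z +
      (9 / 8) * (s - 19) * y * z =
      (1 + s) / 128 * (16 * x + 2 * (1 - s) * y + (19 - s) * z) ^ 2 +
        (9 / 16) * (10 - s) * z ^ 2 := by
    linear_combination ((-(s/32) + 1/32) * y ^ 2 + (-(s/32) + 19/32) * y * z +
      (-(s/128) + 37/128) * z ^ 2 + x * y / 2 + x * z / 4) * h1
  rw [hL]
  have t1 : 0 ≤ (1 + s) / 128 * (16 * x + 2 * (1 - s) * y + (19 - s) * z) ^ 2 := by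
    apply mul_nonneg (by linarith) (sq_nonneg _)
  have t2 : (0:ℝ) ≤ (9 / 16) * (10 - s) * z ^ 2 := by
    apply mul_nonneg (by nlinarith) (sq_nonneg _)
  linarith

/-- Z is positive semidefinite; equivalently, with τ = (7+√37)/8, for all real u and t,
τ(16u² + 9t² + 36u + 9t + 18) − 3(4u² + 3t² + 6ut + 10u + 9t + 6) ≥ 6u + (9/4)t. -/
theorem stmt_17 :
    Zmat.PosSemidef ∧
      ∀ u t : ℝ,
        6 * u + (9 / 4) * t ≤
          ((7 + Real.sqrt 37) / 8) * (16 * u ^ 2 + 9 * t ^ 2 + 36 * u + 9 * t + 18) -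
            3 * (4 * u ^ 2 + 3 * t ^ 2 + 6 * u * t + 10 * u + 9 * t + 6) := by
  constructor
  · refine Matrix.PosSemidef.of_dotProduct_mulVec_nonneg ?_ ?_
    · ext i j
      fin_cases i <;> fin_cases j <;> simp [Zmat, Matrix.conjTranspose_apply]
    · intro x
      have := key (x 0) (x 1) (x 2)
      simp [Zmat, Matrix.mulVec, dotProduct, Fin.sum_univ_three]
      nlinarith [this]
  · intro u t
    nlinarith [key u t 1]
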